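/- Let x, χ ∈ C^N and k ≤ N. If ||x − χ||_∞ ≤ δ and |x_i − χ_i| ≤ |x_i| for all i, then ||x − χ||₂² ≤ k·δ² + err_k(x)², where err_k(x) is the ℓ₂ norm of x outside its top k coordinates. -/

import Mathlib

theorem stmt_16 {ι : Type} [Fintype ι] [DecidableEq ι] (x χ : ι → ℂ) (k : ℕ)
    (hk : k ≤ Fintype.card ι) (δ : ℝ)
    (T : Finset ι) (hT : T.card = k)
    (htop : ∀ i ∈ T, ∀ j ∉ T, ‖x j‖ ≤ ‖x i‖)
    (hinf : ∀ i, ‖x i - χ i‖ ≤ δ)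
    (hdom : ∀ i, ‖x i - χ i‖ ≤ ‖x i‖) :
    ∑ i, ‖x i - χ i‖ ^ 2 ≤ (k : ℝ) * δ ^ 2 + ∑ i ∈ Tᶜ, ‖x i‖ ^ 2 := by
  rw [← Finset.sum_add_sum_compl T]
  gcongr with i hi i hi
  · calc ∑ i ∈ T, ‖x i - χ i‖ ^ 2 ≤ ∑ i ∈ T, δ ^ 2 := by
          gcongr with i hi
          exact hinf i
        _ = k * δ ^ 2 := by rw [Finset.sum_const, hT]; ring
  · exact hdom i
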